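/- arXiv:1807.01305 — 4 statements merged into one kernel-verified Lean document; each statement's English description precedes it below -/
import Mathlib

section
/- Let pk⁽⁰⁾, pk⁽¹⁾ ∈ (0,1) for k = 1, 2, set ORk = (pk⁽¹⁾/qk⁽¹⁾)/(pk⁽⁰⁾/qk⁽⁰⁾) where qk⁽ⁱ⁾ = 1 − pk⁽ⁱ⁾, let ρ⁽⁰⁾, ρ⁽¹⁾ be real numbers, define p*⁽ⁱ⁾ = 1 − q1⁽ⁱ⁾q2⁽ⁱ⁾ − ρ⁽ⁱ⁾√(p1⁽ⁱ⁾p2⁽ⁱ⁾q1⁽ⁱ⁾q2⁽ⁱ⁾) and q*⁽ⁱ⁾ = 1 − p*⁽ⁱ⁾, and assume p*⁽ⁱ⁾, q*⁽ⁱ⁾ ∈ (0,1) for i = 0, 1. Then the odds ratio of the composite endpoint OR* = (p*⁽¹⁾/q*⁽¹⁾)/(p*⁽⁰⁾/q*⁽⁰⁾) satisfies OR* = [ ( (1 + OR1·p1⁽⁰⁾/(1−p1⁽⁰⁾))·(1 + OR2·p2⁽⁰⁾/(1−p2⁽⁰⁾)) − 1 − ρ⁽¹⁾√( OR1·OR2·p1⁽⁰⁾p2⁽⁰⁾/((1−p1⁽⁰⁾)(1−p2⁽⁰⁾))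 ) )·( 1 + ρ⁽⁰⁾√( p1⁽⁰⁾p2⁽⁰⁾/((1−p1⁽⁰⁾)(1−p2⁽⁰⁾)) ) ) ] / [ ( (1 + p1⁽⁰⁾/(1−p1⁽⁰⁾))·(1 + p2⁽⁰⁾/(1−p2⁽⁰⁾)) − 1 − ρ⁽⁰⁾√( p1⁽⁰⁾p2⁽⁰⁾/((1−p1⁽⁰⁾)(1−p2⁽⁰⁾)) ) )·( 1 + ρ⁽¹⁾√( OR1·OR2·p1⁽⁰⁾p2⁽⁰⁾/((1−p1⁽⁰⁾)(1−p2⁽⁰⁾)) ) ) ]. -/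
open Real

lemma sqrt_div_prod (x q1 q2 : ℝ) (hq1 : 0 < q1) (hq2 : 0 < q2) :
    Real.sqrt (x / (q1 * q2)) = Real.sqrt (x * q1 * q2) / (q1 * q2) := by
  have hq : 0 < q1 * q2 := mul_pos hq1 hq2
  have h : x / (q1 * q2) = x * q1 * q2 / (q1 * q2) ^ 2 := by
    field_simp
  rw [h, Real.sqrt_div' _ ?_]
  · rw [Real.sqrt_sq hq.le]
  · exact sq_nonneg _

/-- The odds ratio of the composite endpoint expressed in terms of the marginal
event rates, the marginal odds ratios, and the correlations in each group. -/
theorem composite_odds_ratio_from_margins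
    (p1 p2 P1 P2 OR1 OR2 ρ0 ρ1 pstar0 pstar1 : ℝ)
    (hp1 : p1 ∈ Set.Ioo (0:ℝ) 1) (hp2 : p2 ∈ Set.Ioo (0:ℝ) 1)
    (hP1 : P1 ∈ Set.Ioo (0:ℝ) 1) (hP2 : P2 ∈ Set.Ioo (0:ℝ) 1)
    (hOR1 : OR1 = (P1 / (1 - P1)) / (p1 / (1 - p1)))
    (hOR2 : OR2 = (P2 / (1 - P2)) / (p2 / (1 - p2)))
    (hpstar0 : pstar0 = 1 - (1 - p1) * (1 - p2)
        - ρ0 * Real.sqrt (p1 * p2 * (1 - p1) * (1 - p2)))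
    (hpstar1 : pstar1 = 1 - (1 - P1) * (1 - P2)
        - ρ1 * Real.sqrt (P1 * P2 * (1 - P1) * (1 - P2)))
    (hm0 : pstar0 ∈ Set.Ioo (0:ℝ) 1) (hm1 : pstar1 ∈ Set.Ioo (0:ℝ) 1)
    (hm0' : 1 - pstar0 ∈ Set.Ioo (0:ℝ) 1) (hm1' : 1 - pstar1 ∈ Set.Ioo (0:ℝ) 1) :
    (pstar1 / (1 - pstar1)) / (pstar0 / (1 - pstar0))
    = (((1 + OR1 * p1 / (1 - p1)) * (1 + OR2 * p2 / (1 - p2)) - 1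
          - ρ1 * Real.sqrt (OR1 * OR2 * p1 * p2 / ((1 - p1) * (1 - p2))))
        * (1 + ρ0 * Real.sqrt (p1 * p2 / ((1 - p1) * (1 - p2)))))
      / (((1 + p1 / (1 - p1)) * (1 + p2 / (1 - p2)) - 1
          - ρ0 * Real.sqrt (p1 * p2 / ((1 - p1) * (1 - p2))))
        * (1 + ρ1 * Real.sqrt (OR1 * OR2 * p1 * p2 / ((1 - p1) * (1 - p2))))) := by
  obtain ⟨hp1pos, hp1lt⟩ := hp1
  obtain ⟨hp2pos, hp2lt⟩ := hp2
  obtain ⟨hP1pos, hP1lt⟩ := hP1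
  obtain ⟨hP2pos, hP2lt⟩ := hP2
  have hq1 : (0:ℝ) < 1 - p1 := by linarith
  have hq2 : (0:ℝ) < 1 - p2 := by linarith
  have hQ1 : (0:ℝ) < 1 - P1 := by linarith
  have hQ2 : (0:ℝ) < 1 - P2 := by linarith
  set q1 := 1 - p1
  set q2 := 1 - p2
  set Q1 := 1 - P1
  set Q2 := 1 - P2
  have hA : Real.sqrt (p1 * p2 / (q1 * q2))
      = Real.sqrt (p1 * p2 * q1 * q2) / (q1 * q2) := by
    have := sqrt_div_prod (p1 * p2) q1 q2 hq1 hq2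
    simpa using this
  have harg : OR1 * OR2 * p1 * p2 / (q1 * q2) = P1 * P2 / (Q1 * Q2) := by
    rw [hOR1, hOR2]
    field_simp
  have hB : Real.sqrt (OR1 * OR2 * p1 * p2 / (q1 * q2))
      = Real.sqrt (P1 * P2 * Q1 * Q2) / (Q1 * Q2) := by
    rw [harg]
    have := sqrt_div_prod (P1 * P2) Q1 Q2 hQ1 hQ2
    simpa using this
  set A := Real.sqrt (p1 * p2 * q1 * q2) with hAdef
  set B := Real.sqrt (P1 * P2 * Q1 * Q2) with hBdef
  have hOR1p : OR1 * p1 / q1 = P1 / Q1 := by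
    rw [hOR1]; field_simp
  have hOR2p : OR2 * p2 / q2 = P2 / Q2 := by
    rw [hOR2]; field_simp
  rw [hA, hB, hOR1p, hOR2p]
  have e1 : (1 + P1 / Q1) * (1 + P2 / Q2) - 1 - ρ1 * (B / (Q1 * Q2))
      = pstar1 / (Q1 * Q2) := by
    rw [hpstar1]; field_simp; ring
  have e2 : 1 + ρ0 * (A / (q1 * q2)) = (1 - pstar0) / (q1 * q2) := by
    rw [hpstar0]; field_simp; ring
  have e3 : (1 + p1 / q1) * (1 + p2 / q2) - 1 - ρ0 * (A / (q1 * q2))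
      = pstar0 / (q1 * q2) := by
    rw [hpstar0]; field_simp; ring
  have e4 : 1 + ρ1 * (B / (Q1 * Q2)) = (1 - pstar1) / (Q1 * Q2) := by
    rw [hpstar1]; field_simp; ring
  rw [e1, e2, e3, e4]
  have h1 : pstar0 ≠ 0 := ne_of_gt hm0.1
  have h2 : (1 - pstar1) ≠ 0 := ne_of_gt hm1'.1
  have h3 : pstar1 ≠ 0 := ne_of_gt hm1.1
  have h4 : (1 - pstar0) ≠ 0 := ne_of_gt hm0'.1
  field_simp
end

section
/- Let pk⁽⁰⁾ ∈ (0, 1/2) and δk < 0 with pk⁽¹⁾ = pk⁽⁰⁾ + δk ≥ 0 for k = 1, 2, write qk⁽ⁱ⁾ = 1 − pk⁽ⁱ⁾, and for a common correlation ρ define the composite risk difference δ*(ρ) = δ1·q2⁽⁰⁾ + δ2·q1⁽⁰⁾ − δ1·δ2 + ρ·( √(p1⁽⁰⁾p2⁽⁰⁾q1⁽⁰⁾q2⁽⁰⁾) − √(p1⁽¹⁾p2⁽¹⁾q1⁽¹⁾q2⁽¹⁾) ). Then δ* is a strictly increasing function of ρ: for all real ρ < ρ′, δ*(ρ) < δ*(ρ′).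 -/
open Real

/-- The composite risk difference `δ*(ρ)` is a strictly increasing function of the
correlation `ρ`, provided the control-group event rates are below `1/2` and the
marginal risk differences are negative. -/
theorem composite_risk_difference_strictMono_in_correlation
    (p1 p2 δ1 δ2 : ℝ)
    (hp1 : p1 ∈ Set.Ioo (0:ℝ) (1/2)) (hp2 : p2 ∈ Set.Ioo (0:ℝ) (1/2))
    (hδ1 : δ1 < 0) (hδ2 : δ2 < 0)
    (hp1' : 0 ≤ p1 + δ1) (hp2' : 0 ≤ p2 + δ2) :
    ∀ ρ ρ' : ℝ, ρ < ρ' →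
      (δ1 * (1 - p2) + δ2 * (1 - p1) - δ1 * δ2
          + ρ * (Real.sqrt (p1 * p2 * (1 - p1) * (1 - p2))
              - Real.sqrt ((p1 + δ1) * (p2 + δ2) * (1 - (p1 + δ1)) * (1 - (p2 + δ2)))))
      < (δ1 * (1 - p2) + δ2 * (1 - p1) - δ1 * δ2
          + ρ' * (Real.sqrt (p1 * p2 * (1 - p1) * (1 - p2))
              - Real.sqrt ((p1 + δ1) * (p2 + δ2) * (1 - (p1 + δ1)) * (1 - (p2 + δ2))))) := by
  obtain ⟨h1a, h1b⟩ := hp1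
  obtain ⟨h2a, h2b⟩ := hp2
  intro ρ ρ' hρ
  have key : (p1 + δ1) * (p2 + δ2) * (1 - (p1 + δ1)) * (1 - (p2 + δ2))
      < p1 * p2 * (1 - p1) * (1 - p2) := by
    have e1 : (p1 + δ1) * (1 - (p1 + δ1)) < p1 * (1 - p1) := by nlinarith
    have e2 : (p2 + δ2) * (1 - (p2 + δ2)) < p2 * (1 - p2) := by nlinarith
    have n1 : 0 ≤ (p1 + δ1) * (1 - (p1 + δ1)) := by nlinarith
    have n2 : 0 ≤ (p2 + δ2) * (1 - (p2 + δ2)) := by nlinarith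
    nlinarith [mul_lt_mul'' e1 e2 n1 n2]
  have hsq : Real.sqrt ((p1 + δ1) * (p2 + δ2) * (1 - (p1 + δ1)) * (1 - (p2 + δ2)))
      < Real.sqrt (p1 * p2 * (1 - p1) * (1 - p2)) := by
    have : 0 ≤ (p1 + δ1) * (p2 + δ2) * (1 - (p1 + δ1)) * (1 - (p2 + δ2)) :=
      mul_nonneg (mul_nonneg (mul_nonneg hp1' hp2') (by nlinarith)) (by nlinarith)
    exact Real.sqrt_lt_sqrt this key
  have hc : 0 < Real.sqrt (p1 * p2 * (1 - p1) * (1 - p2))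
      - Real.sqrt ((p1 + δ1) * (p2 + δ2) * (1 - (p1 + δ1)) * (1 - (p2 + δ2))) := by
    linarith
  nlinarith [mul_lt_mul_of_pos_right hρ hc]
end

section
/- Let zα, zβ be real numbers with zα + zβ > 0, let p ∈ (0, 1/2), and define N(p, d) = ((zα + zβ)/d)² · ( p(1−p) + (p+d)(1−p−d) ). Then N(p, d) is strictly increasing in d on (−p, 0): for all −p < d < d′ < 0, N(p, d) < N(p, d′). -/
open Real

/-- The unpooled-variance sample size function
`N(p,d) = ((zα+zβ)/d)² (p(1−p) + (p+d)(1−p−d))` is strictly increasing in the risk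
difference `d` on `(−p, 0)`, for a fixed control-group event rate `p ∈ (0, 1/2)`. -/
theorem sample_size_strictMono_in_effect
    (za zb p : ℝ) (hz : 0 < za + zb) (hp : p ∈ Set.Ioo (0:ℝ) (1/2)) :
    ∀ d d' : ℝ, -p < d → d < d' → d' < 0 →
      ((za + zb) / d) ^ 2 * (p * (1 - p) + (p + d) * (1 - p - d))
        < ((za + zb) / d') ^ 2 * (p * (1 - p) + (p + d') * (1 - p - d')) := by
  intro d d' hd hdd' hd'
  obtain ⟨hp0, hp1⟩ := hp
  have hd0 : d < 0 := hdd'.trans hd'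
  have hd2 : 0 < d ^ 2 := by nlinarith
  have hd'2 : 0 < d' ^ 2 := by nlinarith
  have hz2 : 0 < (za + zb) ^ 2 := by positivity
  have hdp : -p < d' := hd.trans hdd'
  -- key bracket inequality
  have hkey : 2 * p * (1 - p) * (d + d') + (1 - 2 * p) * (d * d') < 0 := by
    nlinarith [mul_pos (neg_pos.2 hd0) (neg_pos.2 hd'), mul_pos hp0 (neg_pos.2 hd'),
      mul_pos hp0 (neg_pos.2 hd0)]
  have e1 : ((za + zb) / d) ^ 2 * (p * (1 - p) + (p + d) * (1 - p - d))
      = ((za + zb) ^ 2 * (p * (1 - p) + (p + d) * (1 - p - d))) / d ^ 2 := by ring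
  have e2 : ((za + zb) / d') ^ 2 * (p * (1 - p) + (p + d') * (1 - p - d'))
      = ((za + zb) ^ 2 * (p * (1 - p) + (p + d') * (1 - p - d'))) / d' ^ 2 := by ring
  rw [e1, e2, div_lt_div_iff₀ hd2 hd'2]
  nlinarith [mul_pos hz2 (mul_pos (sub_pos.2 hdd') (neg_pos.2 hkey)), hkey, hz2]
end

section
/- Let zα, zβ be real numbers with zα + zβ > 0, let pk⁽⁰⁾ ∈ (0, 1/2) and δk < 0 with pk⁽¹⁾ = pk⁽⁰⁾ + δk > 0 for k = 1, 2, and let n(ρ) denote the unpooled-variance sample size for the composite endpoint as a function of the common correlation ρ. Let B_L(θ,λ) and B_U(θ,λ) be the lower and upper correlation bounds determined by θ = (p1⁽⁰⁾, p2⁽⁰⁾) and λ = (δ1, δ2). If B_L(θ,λ) ≤ ρ ≤ B_U(θ,λ), the composite probabilities p*⁽ⁱ⁾ lie in (0,1) throughout [B_L, B_U], and δ*(B_U(θ,λ)) < 0, then n(B_L(θ,λ)) ≤ n(ρ) ≤ n(B_U(θ,λ)); in particular the sample size attains its maximum over the admissible correlations at ρ = B_U(θ,λ). -/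
set_option maxHeartbeats 1000000


open Real

/-- Probability of observing the composite endpoint given the two marginal event rates
and the correlation between the components. -/
noncomputable def pstar (p1 p2 ρ : ℝ) : ℝ :=
  1 - (1 - p1) * (1 - p2) - ρ * Real.sqrt (p1 * p2 * (1 - p1) * (1 - p2))

/-- Unpooled-variance total sample size for detecting a risk difference `d` with
control-group event rate `p`. -/
noncomputable def sampleSize (za zb p d : ℝ) : ℝ :=
  2 * (za + zb) ^ 2 * (p * (1 - p) + (p + d) * (1 - p - d)) / d ^ 2

/-- Lower bound on the common correlation of the two components, determined by the
control-group rates `(p1, p2)` and the marginal risk differences `(δ1, δ2)`. -/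
noncomputable def BL (p1 p2 δ1 δ2 : ℝ) : ℝ :=
  max (max (-Real.sqrt (p1 * p2 / ((1 - p1) * (1 - p2))))
           (-Real.sqrt ((1 - p1) * (1 - p2) / (p1 * p2))))
      (max (-Real.sqrt ((p1 + δ1) * (p2 + δ2) / ((1 - p1 - δ1) * (1 - p2 - δ2))))
           (-Real.sqrt ((1 - p1 - δ1) * (1 - p2 - δ2) / ((p1 + δ1) * (p2 + δ2)))))

/-- Upper bound on the common correlation of the two components, determined by the
control-group rates `(p1, p2)` and the marginal risk differences `(δ1, δ2)`. -/
noncomputable def BU (p1 p2 δ1 δ2 : ℝ) : ℝ :=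
  min (min (Real.sqrt (p1 * (1 - p2) / (p2 * (1 - p1))))
           (Real.sqrt (p2 * (1 - p1) / (p1 * (1 - p2)))))
      (min (Real.sqrt ((p1 + δ1) * (1 - p2 - δ2) / ((p2 + δ2) * (1 - p1 - δ1))))
           (Real.sqrt ((p2 + δ2) * (1 - p1 - δ1) / ((p1 + δ1) * (1 - p2 - δ2)))))

/-- sqrt(a/b) * sqrt(a*b) = a for positive a, b. -/
lemma sqrt_ratio_mul {a b : ℝ} (ha : 0 < a) (hb : 0 < b) :
    Real.sqrt (a / b) * Real.sqrt (a * b) = a := by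
  rw [← Real.sqrt_mul (by positivity)]
  rw [show a / b * (a * b) = a ^ 2 by field_simp]
  exact Real.sqrt_sq ha.le

lemma BU_mul_bounds (p1 p2 δ1 δ2 : ℝ)
    (hp10 : 0 < p1) (hp12 : p1 < 1/2) (hp20 : 0 < p2) (hp22 : p2 < 1/2)
    (hδ1 : δ1 < 0) (hδ2 : δ2 < 0) (hp1' : 0 < p1 + δ1) (hp2' : 0 < p2 + δ2) :
    0 ≤ BU p1 p2 δ1 δ2 ∧
    BU p1 p2 δ1 δ2 * Real.sqrt (p1 * p2 * (1 - p1) * (1 - p2)) ≤ p1 * (1 - p2) ∧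
    BU p1 p2 δ1 δ2 * Real.sqrt (p1 * p2 * (1 - p1) * (1 - p2)) ≤ p2 * (1 - p1) ∧
    BU p1 p2 δ1 δ2 * Real.sqrt ((p1 + δ1) * (p2 + δ2) * (1 - (p1 + δ1)) * (1 - (p2 + δ2)))
      ≤ (p1 + δ1) * (1 - (p2 + δ2)) ∧
    BU p1 p2 δ1 δ2 * Real.sqrt ((p1 + δ1) * (p2 + δ2) * (1 - (p1 + δ1)) * (1 - (p2 + δ2)))
      ≤ (p2 + δ2) * (1 - (p1 + δ1)) ∧
    -(p1 * p2) ≤ BL p1 p2 δ1 δ2 * Real.sqrt (p1 * p2 * (1 - p1) * (1 - p2)) ∧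
    -((p1 + δ1) * (p2 + δ2)) ≤ BL p1 p2 δ1 δ2 *
      Real.sqrt ((p1 + δ1) * (p2 + δ2) * (1 - (p1 + δ1)) * (1 - (p2 + δ2))) := by
  have hq1 : 0 < 1 - p1 := by linarith
  have hq2 : 0 < 1 - p2 := by linarith
  have hq1' : 0 < 1 - p1 - δ1 := by linarith
  have hq2' : 0 < 1 - p2 - δ2 := by linarith
  have hc0nn : 0 ≤ Real.sqrt (p1 * p2 * (1 - p1) * (1 - p2)) := Real.sqrt_nonneg _
  have hc1nn : 0 ≤ Real.sqrt ((p1 + δ1) * (p2 + δ2) * (1 - (p1 + δ1)) * (1 - (p2 + δ2))) :=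
    Real.sqrt_nonneg _
  refine ⟨?_, ?_, ?_, ?_, ?_, ?_, ?_⟩
  · exact le_min (le_min (Real.sqrt_nonneg _) (Real.sqrt_nonneg _))
      (le_min (Real.sqrt_nonneg _) (Real.sqrt_nonneg _))
  · have heq : Real.sqrt (p1 * (1 - p2) / (p2 * (1 - p1))) *
        Real.sqrt (p1 * p2 * (1 - p1) * (1 - p2)) = p1 * (1 - p2) := by
      rw [show p1 * p2 * (1 - p1) * (1 - p2) = (p1 * (1 - p2)) * (p2 * (1 - p1)) from by ring]
      exact sqrt_ratio_mul (by positivity) (by positivity)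
    calc BU p1 p2 δ1 δ2 * Real.sqrt (p1 * p2 * (1 - p1) * (1 - p2))
        ≤ Real.sqrt (p1 * (1 - p2) / (p2 * (1 - p1))) *
          Real.sqrt (p1 * p2 * (1 - p1) * (1 - p2)) :=
          mul_le_mul_of_nonneg_right (le_trans (min_le_left _ _) (min_le_left _ _)) hc0nn
      _ = p1 * (1 - p2) := heq
  · have heq : Real.sqrt (p2 * (1 - p1) / (p1 * (1 - p2))) *
        Real.sqrt (p1 * p2 * (1 - p1) * (1 - p2)) = p2 * (1 - p1) := by
      rw [show p1 * p2 * (1 - p1) * (1 - p2) = (p2 * (1 - p1)) * (p1 * (1 - p2)) from by ring]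
      exact sqrt_ratio_mul (by positivity) (by positivity)
    calc BU p1 p2 δ1 δ2 * Real.sqrt (p1 * p2 * (1 - p1) * (1 - p2))
        ≤ Real.sqrt (p2 * (1 - p1) / (p1 * (1 - p2))) *
          Real.sqrt (p1 * p2 * (1 - p1) * (1 - p2)) :=
          mul_le_mul_of_nonneg_right (le_trans (min_le_left _ _) (min_le_right _ _)) hc0nn
      _ = p2 * (1 - p1) := heq
  · have heq : Real.sqrt ((p1 + δ1) * (1 - p2 - δ2) / ((p2 + δ2) * (1 - p1 - δ1))) *
        Real.sqrt ((p1 + δ1) * (p2 + δ2) * (1 - (p1 + δ1)) * (1 - (p2 + δ2)))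
        = (p1 + δ1) * (1 - p2 - δ2) := by
      rw [show (p1 + δ1) * (p2 + δ2) * (1 - (p1 + δ1)) * (1 - (p2 + δ2))
        = ((p1 + δ1) * (1 - p2 - δ2)) * ((p2 + δ2) * (1 - p1 - δ1)) from by ring]
      exact sqrt_ratio_mul (mul_pos hp1' hq2') (mul_pos hp2' hq1')
    calc BU p1 p2 δ1 δ2 * Real.sqrt ((p1 + δ1) * (p2 + δ2) * (1 - (p1 + δ1)) * (1 - (p2 + δ2)))
        ≤ Real.sqrt ((p1 + δ1) * (1 - p2 - δ2) / ((p2 + δ2) * (1 - p1 - δ1))) *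
          Real.sqrt ((p1 + δ1) * (p2 + δ2) * (1 - (p1 + δ1)) * (1 - (p2 + δ2))) :=
          mul_le_mul_of_nonneg_right (le_trans (min_le_right _ _) (min_le_left _ _)) hc1nn
      _ = (p1 + δ1) * (1 - p2 - δ2) := heq
      _ = (p1 + δ1) * (1 - (p2 + δ2)) := by ring
  · have heq : Real.sqrt ((p2 + δ2) * (1 - p1 - δ1) / ((p1 + δ1) * (1 - p2 - δ2))) *
        Real.sqrt ((p1 + δ1) * (p2 + δ2) * (1 - (p1 + δ1)) * (1 - (p2 + δ2)))
        = (p2 + δ2) * (1 - p1 - δ1) := by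
      rw [show (p1 + δ1) * (p2 + δ2) * (1 - (p1 + δ1)) * (1 - (p2 + δ2))
        = ((p2 + δ2) * (1 - p1 - δ1)) * ((p1 + δ1) * (1 - p2 - δ2)) from by ring]
      exact sqrt_ratio_mul (mul_pos hp2' hq1') (mul_pos hp1' hq2')
    calc BU p1 p2 δ1 δ2 * Real.sqrt ((p1 + δ1) * (p2 + δ2) * (1 - (p1 + δ1)) * (1 - (p2 + δ2)))
        ≤ Real.sqrt ((p2 + δ2) * (1 - p1 - δ1) / ((p1 + δ1) * (1 - p2 - δ2))) *
          Real.sqrt ((p1 + δ1) * (p2 + δ2) * (1 - (p1 + δ1)) * (1 - (p2 + δ2))) :=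
          mul_le_mul_of_nonneg_right (le_trans (min_le_right _ _) (min_le_right _ _)) hc1nn
      _ = (p2 + δ2) * (1 - p1 - δ1) := heq
      _ = (p2 + δ2) * (1 - (p1 + δ1)) := by ring
  · have heq : Real.sqrt (p1 * p2 / ((1 - p1) * (1 - p2))) *
        Real.sqrt (p1 * p2 * (1 - p1) * (1 - p2)) = p1 * p2 := by
      rw [show p1 * p2 * (1 - p1) * (1 - p2) = (p1 * p2) * ((1 - p1) * (1 - p2)) from by ring]
      exact sqrt_ratio_mul (by positivity) (by positivity)
    have hle : -Real.sqrt (p1 * p2 / ((1 - p1) * (1 - p2))) ≤ BL p1 p2 δ1 δ2 :=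
      le_trans (le_max_left _ _) (le_max_left _ _)
    have h2 := mul_le_mul_of_nonneg_right hle hc0nn
    rw [neg_mul, heq] at h2
    exact h2
  · have heq : Real.sqrt ((p1 + δ1) * (p2 + δ2) / ((1 - p1 - δ1) * (1 - p2 - δ2))) *
        Real.sqrt ((p1 + δ1) * (p2 + δ2) * (1 - (p1 + δ1)) * (1 - (p2 + δ2)))
        = (p1 + δ1) * (p2 + δ2) := by
      rw [show (p1 + δ1) * (p2 + δ2) * (1 - (p1 + δ1)) * (1 - (p2 + δ2))
        = ((p1 + δ1) * (p2 + δ2)) * ((1 - p1 - δ1) * (1 - p2 - δ2)) from by ring]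
      exact sqrt_ratio_mul (mul_pos hp1' hp2') (mul_pos hq1' hq2')
    have hle : -Real.sqrt ((p1 + δ1) * (p2 + δ2) / ((1 - p1 - δ1) * (1 - p2 - δ2)))
        ≤ BL p1 p2 δ1 δ2 := le_trans (le_max_left _ _) (le_max_right _ _)
    have h2 := mul_le_mul_of_nonneg_right hle hc1nn
    rw [neg_mul, heq] at h2
    exact h2

lemma prod_mono (p1 p2 δ1 δ2 : ℝ)
    (hp10 : 0 < p1) (hp12 : p1 < 1/2) (hp20 : 0 < p2) (hp22 : p2 < 1/2)
    (hδ1 : δ1 < 0) (hδ2 : δ2 < 0) (hp1' : 0 < p1 + δ1) (hp2' : 0 < p2 + δ2) :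
    (p1 + δ1) * (p2 + δ2) * (1 - (p1 + δ1)) * (1 - (p2 + δ2))
      ≤ p1 * p2 * (1 - p1) * (1 - p2) := by
  have hq1' : 0 < 1 - (p1 + δ1) := by linarith
  have hq2' : 0 < 1 - (p2 + δ2) := by linarith
  have hvm1 : (p1 + δ1) * (1 - (p1 + δ1)) ≤ p1 * (1 - p1) := by nlinarith
  have hvm2 : (p2 + δ2) * (1 - (p2 + δ2)) ≤ p2 * (1 - p2) := by nlinarith
  nlinarith [mul_le_mul hvm1 hvm2 (mul_pos hp2' hq2').le (by nlinarith)]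

/-- Abstract core inequality. -/
lemma core_abstract (v1 v2 w1 w2 P Pb : ℝ)
    (hw1 : 0 < w1) (hw2 : 0 < w2) (hv1 : w1 ≤ v1) (hv2 : w2 ≤ v2)
    (hVb1 : w1 ≤ Pb*(1-Pb)) (hVb2 : w2 ≤ Pb*(1-Pb))
    (ht : 0 < 1 - P - Pb) (hd : 0 < P - Pb)
    (hsum : (1-P-Pb)*(P-Pb) ≤ (v1-w1) + (v2-w2)) :
    2*(v1*v2 + w1*w2) * ((P-Pb)*(1-P-Pb)) ≤ (v1*v2 - w1*w2) * ((P+Pb)*(2-P-Pb)) := by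
  have hT1 : w2*(v1-w1) + w1*(v2-w2) ≤ v1*v2 - w1*w2 := by
    nlinarith [mul_nonneg (sub_nonneg.2 hv1) (sub_nonneg.2 hv2)]
  have hsq := sq_nonneg (P-Pb)
  have hM1 : 4*w1 ≤ 4*(Pb*(1-Pb)) + (P-Pb)^2 := by linarith
  have hM2 : 4*w2 ≤ 4*(Pb*(1-Pb)) + (P-Pb)^2 := by linarith
  have hMpos : (0:ℝ) ≤ 4*(Pb*(1-Pb)) + (P-Pb)^2 := by linarith
  have hT2 : (w2*(v1-w1) + w1*(v2-w2)) * (4*(Pb*(1-Pb)) + (P-Pb)^2)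
      ≤ (v1*v2 - w1*w2) * (4*(Pb*(1-Pb)) + (P-Pb)^2) :=
    mul_le_mul_of_nonneg_right hT1 hMpos
  have hT3 : w2*(v1-w1) * (4*w1) ≤ w2*(v1-w1) * (4*(Pb*(1-Pb)) + (P-Pb)^2) :=
    mul_le_mul_of_nonneg_left hM1 (mul_nonneg hw2.le (sub_nonneg.2 hv1))
  have hT4 : w1*(v2-w2) * (4*w2) ≤ w1*(v2-w2) * (4*(Pb*(1-Pb)) + (P-Pb)^2) :=
    mul_le_mul_of_nonneg_left hM2 (mul_nonneg hw1.le (sub_nonneg.2 hv2))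
  have hT5 : w2*(v1-w1) * (4*w1) + w1*(v2-w2) * (4*w2)
      = 4*(w1*w2) * ((v1-w1) + (v2-w2)) := by ring
  have hT6 : 4*(w1*w2) * ((1-P-Pb)*(P-Pb)) ≤ 4*(w1*w2) * ((v1-w1) + (v2-w2)) :=
    mul_le_mul_of_nonneg_left hsum (by positivity)
  have hKey : 4*(w1*w2) * ((1-P-Pb)*(P-Pb))
      ≤ (v1*v2 - w1*w2) * (4*(Pb*(1-Pb)) + (P-Pb)^2) := by linarith
  have hID : (v1*v2 - w1*w2) * ((P+Pb)*(2-P-Pb))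
      - 2*(v1*v2 + w1*w2) * ((P-Pb)*(1-P-Pb))
      = (v1*v2 - w1*w2) * (4*(Pb*(1-Pb)) + (P-Pb)^2)
      - 4*(w1*w2) * ((1-P-Pb)*(P-Pb)) := by ring
  linarith

/-- Core pointwise inequality at the upper correlation bound. -/
lemma core_ineq (x1 x2 y1 y2 P Pb : ℝ)
    (hy1 : 0 < y1) (hy2 : 0 < y2) (h1 : y1 ≤ x1) (h2 : y2 ≤ x2)
    (hx1 : x1 < 1/2) (hx2 : x2 < 1/2)
    (hP1 : x1 ≤ P) (hP2 : x2 ≤ P) (hQ1 : y1 ≤ Pb) (hQ2 : y2 ≤ Pb)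
    (ht : 0 < 1 - P - Pb) (hd : 0 < P - Pb)
    (hda : P - Pb ≤ (1-y1)*(1-y2) - (1-x1)*(1-x2)) :
    2*((x1*x2*(1-x1)*(1-x2)) + (y1*y2*(1-y1)*(1-y2))) * ((P-Pb)*(1-P-Pb))
      ≤ ((x1*x2*(1-x1)*(1-x2)) - (y1*y2*(1-y1)*(1-y2))) * ((P+Pb)*(2-P-Pb)) := by
  have hw1 : 0 < y1*(1-y1) := by nlinarith
  have hw2 : 0 < y2*(1-y2) := by nlinarith
  have hv1 : y1*(1-y1) ≤ x1*(1-x1) := by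
    nlinarith [mul_nonneg (sub_nonneg.2 h1) (show (0:ℝ) ≤ 1 - x1 - y1 by linarith)]
  have hv2 : y2*(1-y2) ≤ x2*(1-x2) := by
    nlinarith [mul_nonneg (sub_nonneg.2 h2) (show (0:ℝ) ≤ 1 - x2 - y2 by linarith)]
  have hVb1 : y1*(1-y1) ≤ Pb*(1-Pb) := by
    nlinarith [mul_nonneg (sub_nonneg.2 hQ1) (show (0:ℝ) ≤ 1 - Pb - y1 by linarith)]
  have hVb2 : y2*(1-y2) ≤ Pb*(1-Pb) := by
    nlinarith [mul_nonneg (sub_nonneg.2 hQ2) (show (0:ℝ) ≤ 1 - Pb - y2 by linarith)]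
  have hs1 : (x1-y1)*((1-P-Pb)*(1-y2)) ≤ (x1*(1-x1)) - (y1*(1-y1)) := by
    have h1' : (1-P-Pb)*(1-y2) ≤ 1 - x1 - y1 := by
      nlinarith [mul_nonneg ht.le hy2.le]
    have hm : (x1-y1)*((1-P-Pb)*(1-y2)) ≤ (x1-y1)*(1-x1-y1) :=
      mul_le_mul_of_nonneg_left h1' (sub_nonneg.2 h1)
    have hr : (x1*(1-x1)) - (y1*(1-y1)) = (x1-y1)*(1-x1-y1) := by ring
    linarith
  have hs2 : (x2-y2)*((1-P-Pb)*(1-x1)) ≤ (x2*(1-x2)) - (y2*(1-y2)) := by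
    have hx1p : 0 < x1 := lt_of_lt_of_le hy1 h1
    have h2' : (1-P-Pb)*(1-x1) ≤ 1 - x2 - y2 := by
      nlinarith [mul_nonneg ht.le hx1p.le]
    have hm : (x2-y2)*((1-P-Pb)*(1-x1)) ≤ (x2-y2)*(1-x2-y2) :=
      mul_le_mul_of_nonneg_left h2' (sub_nonneg.2 h2)
    have hr : (x2*(1-x2)) - (y2*(1-y2)) = (x2-y2)*(1-x2-y2) := by ring
    linarith
  have hDa : (1-P-Pb)*((1-y1)*(1-y2) - (1-x1)*(1-x2))
      = (x1-y1)*((1-P-Pb)*(1-y2)) + (x2-y2)*((1-P-Pb)*(1-x1)) := by ring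
  have hs3 : (1-P-Pb)*(P-Pb) ≤ (1-P-Pb)*((1-y1)*(1-y2) - (1-x1)*(1-x2)) :=
    mul_le_mul_of_nonneg_left hda ht.le
  have hsum : (1-P-Pb)*(P-Pb) ≤ ((x1*(1-x1)) - (y1*(1-y1))) + ((x2*(1-x2)) - (y2*(1-y2))) := by
    linarith
  have habs := core_abstract (x1*(1-x1)) (x2*(1-x2)) (y1*(1-y1)) (y2*(1-y2)) P Pb
      hw1 hw2 hv1 hv2 hVb1 hVb2 ht hd hsum
  have e1 : x1*(1-x1)*(x2*(1-x2)) = x1*x2*(1-x1)*(1-x2) := by ring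
  have e2 : y1*(1-y1)*(y2*(1-y2)) = y1*y2*(1-y1)*(1-y2) := by ring
  rw [e1, e2] at habs
  exact habs

/-- Over the admissible correlations `[B_L(θ,λ), B_U(θ,λ)]`, the composite-endpoint
sample size is bounded below by its value at `B_L` and above by its value at `B_U`;
in particular it attains its maximum at `ρ = B_U(θ,λ)`. -/
theorem composite_sample_size_bounds
    (za zb p1 p2 δ1 δ2 ρ : ℝ) (hz : 0 < za + zb)
    (hp1 : p1 ∈ Set.Ioo (0:ℝ) (1/2)) (hp2 : p2 ∈ Set.Ioo (0:ℝ) (1/2))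
    (hδ1 : δ1 < 0) (hδ2 : δ2 < 0)
    (hp1' : 0 < p1 + δ1) (hp2' : 0 < p2 + δ2)
    (hρL : BL p1 p2 δ1 δ2 ≤ ρ) (hρU : ρ ≤ BU p1 p2 δ1 δ2)
    (hadm : ∀ r ∈ Set.Icc (BL p1 p2 δ1 δ2) (BU p1 p2 δ1 δ2),
      pstar p1 p2 r ∈ Set.Ioo (0:ℝ) 1 ∧
      pstar (p1 + δ1) (p2 + δ2) r ∈ Set.Ioo (0:ℝ) 1)
    (hdstar : pstar (p1 + δ1) (p2 + δ2) (BU p1 p2 δ1 δ2)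
        - pstar p1 p2 (BU p1 p2 δ1 δ2) < 0) :
    sampleSize za zb (pstar p1 p2 (BL p1 p2 δ1 δ2))
        (pstar (p1 + δ1) (p2 + δ2) (BL p1 p2 δ1 δ2) - pstar p1 p2 (BL p1 p2 δ1 δ2))
      ≤ sampleSize za zb (pstar p1 p2 ρ)
        (pstar (p1 + δ1) (p2 + δ2) ρ - pstar p1 p2 ρ) ∧
    sampleSize za zb (pstar p1 p2 ρ)
        (pstar (p1 + δ1) (p2 + δ2) ρ - pstar p1 p2 ρ)
      ≤ sampleSize za zb (pstar p1 p2 (BU p1 p2 δ1 δ2))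
        (pstar (p1 + δ1) (p2 + δ2) (BU p1 p2 δ1 δ2) - pstar p1 p2 (BU p1 p2 δ1 δ2)) := by
  clear hadm hz
  obtain ⟨hp10, hp12⟩ := hp1
  obtain ⟨hp20, hp22⟩ := hp2
  have hq1 : 0 < 1 - p1 := by linarith
  have hq2 : 0 < 1 - p2 := by linarith
  have hq1' : 0 < 1 - (p1 + δ1) := by linarith
  have hq2' : 0 < 1 - (p2 + δ2) := by linarith
  obtain ⟨hU0, hUc01, hUc02, hUc11, hUc12, hLc0, hLc1⟩ :=
    BU_mul_bounds p1 p2 δ1 δ2 hp10 hp12 hp20 hp22 hδ1 hδ2 hp1' hp2'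
  have hYX := prod_mono p1 p2 δ1 δ2 hp10 hp12 hp20 hp22 hδ1 hδ2 hp1' hp2'
  have hXpos : 0 < p1 * p2 * (1 - p1) * (1 - p2) := by positivity
  have hYpos : 0 < (p1 + δ1) * (p2 + δ2) * (1 - (p1 + δ1)) * (1 - (p2 + δ2)) :=
    mul_pos (mul_pos (mul_pos hp1' hp2') hq1') hq2'
  set L := BL p1 p2 δ1 δ2 with hLdef
  set U := BU p1 p2 δ1 δ2 with hUdef
  set c0 : ℝ := Real.sqrt (p1 * p2 * (1 - p1) * (1 - p2)) with hc0def
  set c1 : ℝ := Real.sqrt ((p1 + δ1) * (p2 + δ2) * (1 - (p1 + δ1)) * (1 - (p2 + δ2))) with hc1def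
  set A0 : ℝ := 1 - (1 - p1) * (1 - p2) with hA0def
  set A1 : ℝ := 1 - (1 - (p1 + δ1)) * (1 - (p2 + δ2)) with hA1def
  have hc0pos : 0 < c0 := by rw [hc0def]; exact Real.sqrt_pos.2 hXpos
  have hc1pos : 0 < c1 := by rw [hc1def]; exact Real.sqrt_pos.2 hYpos
  have hc0sq : c0 ^ 2 = p1 * p2 * (1 - p1) * (1 - p2) := by
    rw [hc0def]; exact Real.sq_sqrt hXpos.le
  have hc1sq : c1 ^ 2 = (p1 + δ1) * (p2 + δ2) * (1 - (p1 + δ1)) * (1 - (p2 + δ2)) := by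
    rw [hc1def]; exact Real.sq_sqrt hYpos.le
  have hc1le : c1 ≤ c0 := by rw [hc0def, hc1def]; exact Real.sqrt_le_sqrt hYX
  have hPs : ∀ r : ℝ, pstar p1 p2 r = A0 - r * c0 := by
    intro r; rw [hA0def, hc0def]; rfl
  have hPbs : ∀ r : ℝ, pstar (p1 + δ1) (p2 + δ2) r = A1 - r * c1 := by
    intro r; rw [hA1def, hc1def]; rfl
  have hA0e1 : A0 - p2 * (1 - p1) = p1 := by rw [hA0def]; ring
  have hA0e2 : A0 - p1 * (1 - p2) = p2 := by rw [hA0def]; ring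
  have hA0e3 : A0 + p1 * p2 = p1 + p2 := by rw [hA0def]; ring
  have hA1e1 : A1 - (p2 + δ2) * (1 - (p1 + δ1)) = p1 + δ1 := by rw [hA1def]; ring
  have hA1e2 : A1 - (p1 + δ1) * (1 - (p2 + δ2)) = p2 + δ2 := by rw [hA1def]; ring
  have hA1e3 : A1 + (p1 + δ1) * (p2 + δ2) = (p1 + δ1) + (p2 + δ2) := by rw [hA1def]; ring
  have hA01 : (1 - (p1 + δ1)) * (1 - (p2 + δ2)) - (1 - p1) * (1 - p2) = A0 - A1 := by
    rw [hA0def, hA1def]; ring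
  clear_value L U c0 c1 A0 A1
  clear hLdef hUdef hc0def hc1def hA0def hA1def hYX
  -- pointwise bounds on [L, U]
  have hPge1 : ∀ r : ℝ, r ≤ U → p1 ≤ A0 - r * c0 := by
    intro r hr
    have := mul_le_mul_of_nonneg_right hr hc0pos.le
    linarith [hUc02]
  have hPge2 : ∀ r : ℝ, r ≤ U → p2 ≤ A0 - r * c0 := by
    intro r hr
    have := mul_le_mul_of_nonneg_right hr hc0pos.le
    linarith [hUc01]
  have hPle : ∀ r : ℝ, L ≤ r → A0 - r * c0 ≤ p1 + p2 := by
    intro r hr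
    have := mul_le_mul_of_nonneg_right hr hc0pos.le
    linarith [hLc0]
  have hPbge1 : ∀ r : ℝ, r ≤ U → p1 + δ1 ≤ A1 - r * c1 := by
    intro r hr
    have := mul_le_mul_of_nonneg_right hr hc1pos.le
    linarith [hUc12]
  have hPbge2 : ∀ r : ℝ, r ≤ U → p2 + δ2 ≤ A1 - r * c1 := by
    intro r hr
    have := mul_le_mul_of_nonneg_right hr hc1pos.le
    linarith [hUc11]
  have hPble : ∀ r : ℝ, L ≤ r → A1 - r * c1 ≤ (p1 + δ1) + (p2 + δ2) := by
    intro r hr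
    have := mul_le_mul_of_nonneg_right hr hc1pos.le
    linarith [hLc1]
  -- d is positive on [L, U]
  have hdU : 0 < (A0 - A1) - U * (c0 - c1) := by
    rw [hPbs U, hPs U] at hdstar
    linarith [hdstar]
  clear hdstar
  have hdpos : ∀ r : ℝ, r ≤ U → 0 < (A0 - A1) - r * (c0 - c1) := by
    intro r hr
    have h0 : 0 ≤ (U - r) * (c0 - c1) :=
      mul_nonneg (sub_nonneg.2 hr) (sub_nonneg.2 hc1le)
    linarith [hdU]
  -- the derivative-sign quantity G is nonneg on [L, U]
  have hG : ∀ r : ℝ, L ≤ r → r ≤ U →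
      0 ≤ (c0 - c1) * ((A0 + A1 - r * (c0 + c1)) * (2 - (A0 + A1 - r * (c0 + c1))))
        - (c0 + c1) * (((A0 - A1) - r * (c0 - c1)) * (1 - (A0 + A1 - r * (c0 + c1)))) := by
    intro r hrL hrU
    have hsplit : A0 + A1 - r * (c0 + c1) = (A0 - r * c0) + (A1 - r * c1) := by ring
    have hP1r := hPge1 r hrU
    have hP2r := hPge2 r hrU
    have hPb1r := hPbge1 r hrU
    have hPb2r := hPbge2 r hrU
    have hPler := hPle r hrL
    have hPbler := hPble r hrL
    have hs0 : 0 < A0 + A1 - r * (c0 + c1) := by rw [hsplit]; linarith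
    have hs2 : A0 + A1 - r * (c0 + c1) < 2 := by rw [hsplit]; linarith
    have hdr := hdpos r hrU
    rcases le_or_gt (1 - (A0 + A1 - r * (c0 + c1))) 0 with hts | hts
    · have h1 : 0 ≤ (c0 - c1) * ((A0 + A1 - r * (c0 + c1)) * (2 - (A0 + A1 - r * (c0 + c1)))) :=
        mul_nonneg (by linarith) (mul_nonneg hs0.le (by linarith))
      have h2 : (c0 + c1) * (((A0 - A1) - r * (c0 - c1)) * (1 - (A0 + A1 - r * (c0 + c1)))) ≤ 0 :=
        mul_nonpos_of_nonneg_of_nonpos (by linarith)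
          (mul_nonpos_of_nonneg_of_nonpos hdr.le hts)
      linarith
    · have htUmul : r * (c0 + c1) ≤ U * (c0 + c1) :=
        mul_le_mul_of_nonneg_right hrU (by linarith)
      have htU : 1 - (A0 + A1 - r * (c0 + c1)) ≤ 1 - (A0 + A1 - U * (c0 + c1)) := by linarith
      have htU0 : 0 < 1 - (A0 + A1 - U * (c0 + c1)) := lt_of_lt_of_le hts htU
      have hGU : 0 ≤ (c0 - c1) * ((A0 + A1 - U * (c0 + c1)) * (2 - (A0 + A1 - U * (c0 + c1))))
          - (c0 + c1) * (((A0 - A1) - U * (c0 - c1)) * (1 - (A0 + A1 - U * (c0 + c1)))) := by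
        have hcore := core_ineq p1 p2 (p1 + δ1) (p2 + δ2) (A0 - U * c0) (A1 - U * c1)
          hp1' hp2' (by linarith) (by linarith) hp12 hp22
          (hPge1 U le_rfl) (hPge2 U le_rfl) (hPbge1 U le_rfl) (hPbge2 U le_rfl)
          (by linarith [htU0]) (by linarith [hdU])
          (by linarith [mul_nonneg hU0 (sub_nonneg.2 hc1le), hA01])
        have hCpos : 0 < c0 + c1 := by linarith
        have hC2 : (c0 + c1) ^ 2 ≤ 2 * ((p1 * p2 * (1 - p1) * (1 - p2))
            + ((p1 + δ1) * (p2 + δ2) * (1 - (p1 + δ1)) * (1 - (p2 + δ2)))) := by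
          linarith [sq_nonneg (c0 - c1), hc0sq, hc1sq, sq_nonneg (c0 + c1)]
        have hdtU : 0 ≤ ((A0 - A1) - U * (c0 - c1)) * (1 - (A0 + A1 - U * (c0 + c1))) :=
          mul_nonneg hdU.le htU0.le
        have h2 : (c0 + c1) ^ 2 * (((A0 - A1) - U * (c0 - c1)) * (1 - (A0 + A1 - U * (c0 + c1))))
            ≤ 2 * ((p1 * p2 * (1 - p1) * (1 - p2))
              + ((p1 + δ1) * (p2 + δ2) * (1 - (p1 + δ1)) * (1 - (p2 + δ2))))
              * (((A0 - A1) - U * (c0 - c1)) * (1 - (A0 + A1 - U * (c0 + c1)))) :=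
          mul_le_mul_of_nonneg_right hC2 hdtU
        have hfact : (c0 + c1) *
            ((c0 - c1) * ((A0 + A1 - U * (c0 + c1)) * (2 - (A0 + A1 - U * (c0 + c1))))
              - (c0 + c1) * (((A0 - A1) - U * (c0 - c1)) * (1 - (A0 + A1 - U * (c0 + c1)))))
            = ((p1 * p2 * (1 - p1) * (1 - p2))
              - ((p1 + δ1) * (p2 + δ2) * (1 - (p1 + δ1)) * (1 - (p2 + δ2))))
              * ((A0 + A1 - U * (c0 + c1)) * (2 - (A0 + A1 - U * (c0 + c1))))
            - (c0 + c1) ^ 2 * (((A0 - A1) - U * (c0 - c1)) * (1 - (A0 + A1 - U * (c0 + c1)))) := by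
          linear_combination
            ((A0 + A1 - U * (c0 + c1)) * (2 - (A0 + A1 - U * (c0 + c1)))) * hc0sq
            - ((A0 + A1 - U * (c0 + c1)) * (2 - (A0 + A1 - U * (c0 + c1)))) * hc1sq
        have hE1 : (A0 - U * c0 - (A1 - U * c1)) * (1 - (A0 - U * c0) - (A1 - U * c1))
            = ((A0 - A1) - U * (c0 - c1)) * (1 - (A0 + A1 - U * (c0 + c1))) := by ring
        have hE2 : (A0 - U * c0 + (A1 - U * c1)) * (2 - (A0 - U * c0) - (A1 - U * c1))
            = (A0 + A1 - U * (c0 + c1)) * (2 - (A0 + A1 - U * (c0 + c1))) := by ring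
        rw [hE1, hE2] at hcore
        have hstep : 0 ≤ (c0 + c1) *
            ((c0 - c1) * ((A0 + A1 - U * (c0 + c1)) * (2 - (A0 + A1 - U * (c0 + c1))))
              - (c0 + c1) * (((A0 - A1) - U * (c0 - c1)) * (1 - (A0 + A1 - U * (c0 + c1))))) := by
          rw [hfact]
          linarith [hcore, h2]
        exact (mul_nonneg_iff_of_pos_left hCpos).mp hstep
      have hβr : (c0 - c1) * ((A0 + A1 - r * (c0 + c1)) * (2 - (A0 + A1 - r * (c0 + c1))))
          - (c0 + c1) * (((A0 - A1) - r * (c0 - c1)) * (1 - (A0 + A1 - r * (c0 + c1))))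
          = (c0 - c1) + (1 - (A0 + A1 - r * (c0 + c1)))
            * ((c0 - c1) * ((A0 + A1) - 1) - (c0 + c1) * (A0 - A1)) := by ring
      have hβU : (c0 - c1) * ((A0 + A1 - U * (c0 + c1)) * (2 - (A0 + A1 - U * (c0 + c1))))
          - (c0 + c1) * (((A0 - A1) - U * (c0 - c1)) * (1 - (A0 + A1 - U * (c0 + c1))))
          = (c0 - c1) + (1 - (A0 + A1 - U * (c0 + c1)))
            * ((c0 - c1) * ((A0 + A1) - 1) - (c0 + c1) * (A0 - A1)) := by ring
      rw [hβU] at hGU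
      rw [hβr]
      rcases le_or_gt 0 ((c0 - c1) * ((A0 + A1) - 1) - (c0 + c1) * (A0 - A1)) with hβ | hβ
      · have := mul_nonneg hts.le hβ
        linarith [sub_nonneg.2 hc1le]
      · have hmm : (1 - (A0 + A1 - U * (c0 + c1)))
            * ((c0 - c1) * ((A0 + A1) - 1) - (c0 + c1) * (A0 - A1))
            ≤ (1 - (A0 + A1 - r * (c0 + c1)))
            * ((c0 - c1) * ((A0 + A1) - 1) - (c0 + c1) * (A0 - A1)) :=
          mul_le_mul_of_nonpos_right htU hβ.le
        linarith
  -- monotonicity of the normalized sample size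
  have hLU : L ≤ U := le_trans hρL hρU
  have hmono : MonotoneOn (fun r : ℝ =>
      ((A0 + A1 - r * (c0 + c1)) * (2 - (A0 + A1 - r * (c0 + c1))))
        / (((A0 - A1) - r * (c0 - c1)) ^ 2)) (Set.Icc L U) := by
    apply monotoneOn_of_deriv_nonneg (convex_Icc L U)
    · apply ContinuousOn.div
      · fun_prop
      · fun_prop
      · intro x hx
        exact pow_ne_zero 2 (ne_of_gt (hdpos x hx.2))
    · rw [interior_Icc]
      intro x hx
      apply DifferentiableAt.differentiableWithinAt
      apply DifferentiableAt.div
      · fun_prop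
      · fun_prop
      · exact pow_ne_zero 2 (ne_of_gt (hdpos x hx.2.le))
    · rw [interior_Icc]
      intro x hx
      have hs' : HasDerivAt (fun r : ℝ => A0 + A1 - r * (c0 + c1)) (-(c0 + c1)) x :=
        (hasDerivAt_mul_const (c0 + c1)).const_sub (A0 + A1)
      have h2s : HasDerivAt (fun r : ℝ => 2 - (A0 + A1 - r * (c0 + c1))) (-(-(c0 + c1))) x :=
        hs'.const_sub 2
      have hnum := hs'.mul h2s
      have hdd : HasDerivAt (fun r : ℝ => (A0 - A1) - r * (c0 - c1)) (-(c0 - c1)) x :=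
        (hasDerivAt_mul_const (c0 - c1)).const_sub (A0 - A1)
      have hden : HasDerivAt (fun r : ℝ => ((A0 - A1) - r * (c0 - c1)) ^ 2)
          (2 * ((A0 - A1) - x * (c0 - c1)) * (-(c0 - c1))) x := by
        simpa using hdd.fun_pow 2
      have hdx := hdpos x hx.2.le
      have hdiv : HasDerivAt (fun r : ℝ =>
          ((A0 + A1 - r * (c0 + c1)) * (2 - (A0 + A1 - r * (c0 + c1))))
            / (((A0 - A1) - r * (c0 - c1)) ^ 2))
          ((((-(c0 + c1)) * (2 - (A0 + A1 - x * (c0 + c1)))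
              + (A0 + A1 - x * (c0 + c1)) * (-(-(c0 + c1))))
              * (((A0 - A1) - x * (c0 - c1)) ^ 2)
            - ((A0 + A1 - x * (c0 + c1)) * (2 - (A0 + A1 - x * (c0 + c1))))
              * (2 * ((A0 - A1) - x * (c0 - c1)) * (-(c0 - c1))))
            / ((((A0 - A1) - x * (c0 - c1)) ^ 2) ^ 2)) x :=
        hnum.div hden (pow_ne_zero 2 (ne_of_gt hdx))
      rw [hdiv.deriv]
      apply div_nonneg _ (by positivity)
      have hGx := hG x hx.1.le hx.2.le
      have h2dG : 0 ≤ 2 * ((A0 - A1) - x * (c0 - c1)) *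
          ((c0 - c1) * ((A0 + A1 - x * (c0 + c1)) * (2 - (A0 + A1 - x * (c0 + c1))))
            - (c0 + c1) * (((A0 - A1) - x * (c0 - c1)) * (1 - (A0 + A1 - x * (c0 + c1))))) :=
        mul_nonneg (by linarith) hGx
      linarith [h2dG]
  -- translate sampleSize into the monotone quantity
  have hSS : ∀ r : ℝ, L ≤ r → r ≤ U →
      sampleSize za zb (pstar p1 p2 r) (pstar (p1 + δ1) (p2 + δ2) r - pstar p1 p2 r)
        = (za + zb) ^ 2 *
          (((A0 + A1 - r * (c0 + c1)) * (2 - (A0 + A1 - r * (c0 + c1))))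
            / (((A0 - A1) - r * (c0 - c1)) ^ 2)) - (za + zb) ^ 2 := by
    intro r h1r h2r
    have hdr := hdpos r h2r
    have hdne : ((A0 - A1) - r * (c0 - c1)) ≠ 0 := ne_of_gt hdr
    have hdne2 : (A1 - r * c1 - (A0 - r * c0)) ≠ 0 := by
      intro h; apply hdne; linarith [h]
    rw [hPs r, hPbs r]
    simp only [sampleSize]
    field_simp
    ring
  have hρmem : ρ ∈ Set.Icc L U := ⟨hρL, hρU⟩
  have hLmem : L ∈ Set.Icc L U := Set.left_mem_Icc.2 hLU
  have hUmem : U ∈ Set.Icc L U := Set.right_mem_Icc.2 hLU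
  have hm1 := hmono hLmem hρmem hρL
  have hm2 := hmono hρmem hUmem hρU
  dsimp only at hm1 hm2
  rw [hSS L le_rfl hLU, hSS ρ hρL hρU, hSS U hLU le_rfl]
  constructor
  · have := mul_le_mul_of_nonneg_left hm1 (sq_nonneg (za + zb))
    linarith
  · have := mul_le_mul_of_nonneg_left hm2 (sq_nonneg (za + zb))
    linarith
end
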